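/- Let G be a finite tournament with n ≥ 3 vertices and for each vertex i let d_i denote its out-degree. Then the following are equivalent: (1) G is transitive, i.e. (i,j) ∈ E(G) and (j,k) ∈ E(G) imply (i,k) ∈ E(G); (2) G is acyclic, i.e. G contains no directed cycle C_k with k ≥ 3 as a subgraph; (3) G contains no directed 3-cycle C_3 as a subgraph; (4) the vertices of G can be enumerated v_1, …, v_n so that (v_i, v_j) ∈ E(G) if and only if 1 ≤ i < j ≤ n; (5) ∑_{i=1}^n d_i² = n(n−1)(2n−1)/6; (6) for each k = 1, …, n, the number of injective adjacency-preserving maps from the directed path P_k into G equals binom(n,k); (7) the number of injective adjacency-preserving maps from P_3 into G equals binom(n,3); (8) for each k = 1, …, n, the number of injective adjacency-preserving maps from the transitive tournament T_k into G equals binom(n,k); (9) the number of injective adjacency-preserving maps from T_3 into G equals binom(n,3). -/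

import Mathlib

/-- The directed path on `Fin k`: edges `(i, i+1)`. -/
def pathRel (k : ℕ) : Fin k → Fin k → Prop := fun i j => (j : ℕ) = (i : ℕ) + 1

/-- The transitive tournament on `Fin k`: edges `(i, j)` for `i < j`. -/
def transRel (k : ℕ) : Fin k → Fin k → Prop := fun i j => i < j

/-- The directed cycle on `Fin k`: edges `(i, i+1)` together with `(k-1, 0)`. -/
def cycleRel (k : ℕ) : Fin k → Fin k → Prop :=
  fun i j => (j : ℕ) = (i : ℕ) + 1 ∨ ((i : ℕ) = k - 1 ∧ (j : ℕ) = 0)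

/-- The number of injective adjacency-preserving maps from `(A, EA)` into `(B, EB)`. -/
noncomputable def injHomCount {A B : Type} (EA : A → A → Prop) (EB : B → B → Prop) : ℕ :=
  Nat.card {φ : A → B // Function.Injective φ ∧ ∀ a a' : A, EA a a' → EB (φ a) (φ a')}

namespace MoonAux
open Finset
open scoped Classical

variable {V : Type} [Fintype V] (E : V → V → Prop)

noncomputable def Pset : Finset (V × V × V) :=
  univ.filter fun p => E p.1 p.2.1 ∧ E p.2.1 p.2.2 ∧ p.1 ≠ p.2.2
noncomputable def Tset : Finset (V × V × V) :=
  univ.filter fun p => E p.1 p.2.1 ∧ E p.2.1 p.2.2 ∧ E p.1 p.2.2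
noncomputable def Cset : Finset (V × V × V) :=
  univ.filter fun p => E p.1 p.2.1 ∧ E p.2.1 p.2.2 ∧ E p.2.2 p.1
noncomputable def Uc : Finset (Finset V) :=
  (univ.powersetCard 3).filter fun s => ∃ a b c, s = {a, b, c} ∧ E a b ∧ E b c ∧ E c a

variable {E}
variable (hirr : ∀ v : V, ¬ E v v) (htot : ∀ u v : V, u ≠ v → (E u v ↔ ¬ E v u))

set_option linter.unusedSectionVars false

include hirr in
lemma ne_of_e {a b : V} (h : E a b) : a ≠ b := by
  rintro rfl; exact hirr a h

include hirr htot in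
lemma asymm' {a b : V} (h : E a b) : ¬ E b a :=
  fun h' => ((htot a b (ne_of_e hirr h)).1 h) h'

include htot in
lemma tot' {a b : V} (hne : a ≠ b) (h : ¬ E a b) : E b a := by
  by_contra h'
  exact h ((htot a b hne).2 h')

lemma mem_Pset {p : V × V × V} :
    p ∈ Pset E ↔ E p.1 p.2.1 ∧ E p.2.1 p.2.2 ∧ p.1 ≠ p.2.2 := by simp [Pset]
lemma mem_Tset {p : V × V × V} :
    p ∈ Tset E ↔ E p.1 p.2.1 ∧ E p.2.1 p.2.2 ∧ E p.1 p.2.2 := by simp [Tset]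
lemma mem_Cset {p : V × V × V} :
    p ∈ Cset E ↔ E p.1 p.2.1 ∧ E p.2.1 p.2.2 ∧ E p.2.2 p.1 := by simp [Cset]
lemma mem_Uc {s : Finset V} :
    s ∈ Uc E ↔ s.card = 3 ∧ ∃ a b c, s = {a, b, c} ∧ E a b ∧ E b c ∧ E c a := by
  simp [Uc, Finset.mem_powersetCard_univ]

lemma card3 {α : Type*} [DecidableEq α] {a b c : α} (hab : a ≠ b) (hac : a ≠ c) (hbc : b ≠ c) :
    ({a, b, c} : Finset α).card = 3 := by
  rw [card_insert_of_notMem (by simp [hab, hac]),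
    card_insert_of_notMem (by simp [hbc]), card_singleton]

lemma inj3 {a b c : V} (hab : a ≠ b) (hac : a ≠ c) (hbc : b ≠ c) :
    Function.Injective ![a, b, c] := by
  intro i j h
  fin_cases i <;> fin_cases j <;> simp_all

lemma pres_path3 {a b c : V} (h1 : E a b) (h2 : E b c) :
    ∀ i j : Fin 3, pathRel 3 i j → E (![a, b, c] i) (![a, b, c] j) := by
  intro i j hij
  fin_cases i <;> fin_cases j <;> simp_all [pathRel]

lemma pres_trans3 {a b c : V} (h1 : E a b) (h2 : E b c) (h3 : E a c) :
    ∀ i j : Fin 3, transRel 3 i j → E (![a, b, c] i) (![a, b, c] j) := by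
  intro i j hij
  fin_cases i <;> fin_cases j <;> simp_all [transRel]

lemma pres_cyc3 {a b c : V} (h1 : E a b) (h2 : E b c) (h3 : E c a) :
    ∀ i j : Fin 3, cycleRel 3 i j → E (![a, b, c] i) (![a, b, c] j) := by
  intro i j hij
  fin_cases i <;> fin_cases j <;> simp_all [cycleRel]


include hirr in
lemma count_P3 : injHomCount (pathRel 3) E = (Pset E).card := by
  rw [injHomCount, ← Fintype.card_coe (Pset E), ← Nat.card_eq_fintype_card]
  apply Nat.card_congr
  refine Equiv.mk
    (fun φ => ⟨(φ.1 0, φ.1 1, φ.1 2), mem_Pset.2 ⟨φ.2.2 0 1 (by simp [pathRel]),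
      φ.2.2 1 2 (by simp [pathRel]), fun h => absurd (φ.2.1 h) (by decide)⟩⟩)
    (fun p => ⟨![p.1.1, p.1.2.1, p.1.2.2], ?_, ?_⟩) ?_ ?_
  · obtain ⟨h1, h2, h3⟩ := mem_Pset.1 p.2
    exact inj3 (ne_of_e hirr h1) h3 (ne_of_e hirr h2)
  · obtain ⟨h1, h2, h3⟩ := mem_Pset.1 p.2
    exact pres_path3 h1 h2
  · intro φ
    apply Subtype.ext
    funext i
    fin_cases i <;> rfl
  · intro p
    apply Subtype.ext
    simp

include hirr in
lemma count_T3 : injHomCount (transRel 3) E = (Tset E).card := by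
  rw [injHomCount, ← Fintype.card_coe (Tset E), ← Nat.card_eq_fintype_card]
  apply Nat.card_congr
  refine Equiv.mk
    (fun φ => ⟨(φ.1 0, φ.1 1, φ.1 2), mem_Tset.2 ⟨φ.2.2 0 1 (by simp [transRel]),
      φ.2.2 1 2 (by simp [transRel]), φ.2.2 0 2 (by simp [transRel])⟩⟩)
    (fun p => ⟨![p.1.1, p.1.2.1, p.1.2.2], ?_, ?_⟩) ?_ ?_
  · obtain ⟨h1, h2, h3⟩ := mem_Tset.1 p.2
    exact inj3 (ne_of_e hirr h1) (ne_of_e hirr h3) (ne_of_e hirr h2)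
  · obtain ⟨h1, h2, h3⟩ := mem_Tset.1 p.2
    exact pres_trans3 h1 h2 h3
  · intro φ
    apply Subtype.ext
    funext i
    fin_cases i <;> rfl
  · intro p
    apply Subtype.ext
    simp

include hirr in
lemma no_c3_iff :
    (¬ ∃ φ : Fin 3 → V, Function.Injective φ ∧
        ∀ i j : Fin 3, cycleRel 3 i j → E (φ i) (φ j)) ↔ Cset E = ∅ := by
  constructor
  · intro h
    by_contra hne
    obtain ⟨p, hp⟩ := Finset.nonempty_iff_ne_empty.2 hne
    obtain ⟨h1, h2, h3⟩ := mem_Cset.1 hp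
    exact h ⟨![p.1, p.2.1, p.2.2],
      inj3 (ne_of_e hirr h1) (ne_of_e hirr h3).symm (ne_of_e hirr h2), pres_cyc3 h1 h2 h3⟩
  · rintro hC ⟨φ, hinj, hpres⟩
    have : (φ 0, φ 1, φ 2) ∈ Cset E := mem_Cset.2
      ⟨hpres 0 1 (by simp [cycleRel]), hpres 1 2 (by simp [cycleRel]),
        hpres 2 0 (by simp [cycleRel])⟩
    simp [hC] at this

include hirr htot in
lemma Cset_empty_iff_Uc : Cset E = ∅ ↔ Uc E = ∅ := by
  simp only [Finset.eq_empty_iff_forall_notMem]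
  constructor
  · intro h s hs
    obtain ⟨-, a, b, c, rfl, h1, h2, h3⟩ := mem_Uc.1 hs
    exact h (a, b, c) (mem_Cset.2 ⟨h1, h2, h3⟩)
  · intro h p hp
    obtain ⟨h1, h2, h3⟩ := mem_Cset.1 hp
    exact h {p.1, p.2.1, p.2.2} (mem_Uc.2 ⟨card3 (ne_of_e hirr h1) (ne_of_e hirr h3).symm
      (ne_of_e hirr h2), p.1, p.2.1, p.2.2, rfl, h1, h2, h3⟩)

include hirr htot in
lemma Pset_eq : (Pset E).card = (Tset E).card + (Cset E).card := by
  have hU : Pset E = Tset E ∪ Cset E := by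
    ext p
    simp only [mem_Pset, mem_Tset, mem_Cset, Finset.mem_union]
    constructor
    · rintro ⟨h1, h2, hne⟩
      by_cases h : E p.1 p.2.2
      · exact Or.inl ⟨h1, h2, h⟩
      · exact Or.inr ⟨h1, h2, tot' htot hne h⟩
    · rintro (⟨h1, h2, h3⟩ | ⟨h1, h2, h3⟩)
      exacts [⟨h1, h2, ne_of_e hirr h3⟩, ⟨h1, h2, (ne_of_e hirr h3).symm⟩]
  rw [hU, Finset.card_union_of_disjoint]
  rw [Finset.disjoint_left]
  intro p hp hp'
  exact asymm' hirr htot (mem_Tset.1 hp).2.2 (mem_Cset.1 hp').2.2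

include hirr htot in
lemma Cset_lb : 3 * (Uc E).card ≤ (Cset E).card := by
  have hmap : ∀ p ∈ Cset E, ({p.1, p.2.1, p.2.2} : Finset V) ∈ Uc E := by
    intro p hp
    obtain ⟨h1, h2, h3⟩ := mem_Cset.1 hp
    exact mem_Uc.2 ⟨card3 (ne_of_e hirr h1) (ne_of_e hirr h3).symm (ne_of_e hirr h2),
      p.1, p.2.1, p.2.2, rfl, h1, h2, h3⟩
  rw [Finset.card_eq_sum_card_fiberwise hmap]
  calc 3 * (Uc E).card = ∑ _s ∈ Uc E, 3 := by rw [Finset.sum_const, smul_eq_mul, mul_comm]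
    _ ≤ _ := by
      apply Finset.sum_le_sum
      intro s hs
      obtain ⟨-, a, b, c, rfl, h1, h2, h3⟩ := mem_Uc.1 hs
      have hab := ne_of_e hirr h1
      have hbc := ne_of_e hirr h2
      have hca := ne_of_e hirr h3
      have hsub : ({(a, b, c), (b, c, a), (c, a, b)} : Finset (V × V × V)) ⊆
          (Cset E).filter fun p => ({p.1, p.2.1, p.2.2} : Finset V) = {a, b, c} := by
        intro p hp
        simp only [Finset.mem_insert, Finset.mem_singleton] at hp
        rcases hp with rfl | rfl | rfl <;>
          refine Finset.mem_filter.2 ⟨mem_Cset.2 ⟨?_, ?_, ?_⟩, ?_⟩ <;>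
            first
              | assumption
              | (ext x; simp; try tauto)
      calc 3 = ({(a, b, c), (b, c, a), (c, a, b)} : Finset (V × V × V)).card := by
              refine (card3 ?_ ?_ ?_).symm <;> simp [Prod.ext_iff] <;> tauto
        _ ≤ _ := Finset.card_le_card hsub

include hirr htot in
lemma trans_not_cyc {a b c : V} (h1 : E a b) (h2 : E b c) (h3 : E a c) :
    ({a, b, c} : Finset V) ∉ Uc E := by
  intro hs
  obtain ⟨-, x, y, z, hxyz, g1, g2, g3⟩ := mem_Uc.1 hs
  have n1 := asymm' hirr htot g1
  have n2 := asymm' hirr htot g2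
  have n3 := asymm' hirr htot g3
  have hax : a = x ∨ a = y ∨ a = z := by
    have : a ∈ ({x, y, z} : Finset V) := hxyz ▸ (by simp)
    simpa using this
  have hbx : b = x ∨ b = y ∨ b = z := by
    have : b ∈ ({x, y, z} : Finset V) := hxyz ▸ (by simp)
    simpa using this
  have hcx : c = x ∨ c = y ∨ c = z := by
    have : c ∈ ({x, y, z} : Finset V) := hxyz ▸ (by simp)
    simpa using this
  have nx := hirr x
  have ny := hirr y
  have nz := hirr z
  rcases hax with rfl | rfl | rfl <;> rcases hbx with rfl | rfl | rfl <;>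
    rcases hcx with rfl | rfl | rfl <;> tauto

include hirr htot in
lemma Tset_card : (Tset E).card + (Uc E).card = (Fintype.card V).choose 3 := by
  have hUsub : Uc E ⊆ univ.powersetCard 3 := Finset.filter_subset _ _
  have hbij : (Tset E).card = ((univ.powersetCard 3 : Finset (Finset V)) \ Uc E).card := by
    apply Finset.card_bij (fun p _ => ({p.1, p.2.1, p.2.2} : Finset V))
    · intro p hp
      obtain ⟨h1, h2, h3⟩ := mem_Tset.1 hp
      rw [Finset.mem_sdiff, Finset.mem_powersetCard_univ]
      exact ⟨card3 (ne_of_e hirr h1) (ne_of_e hirr h3) (ne_of_e hirr h2),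
        trans_not_cyc hirr htot h1 h2 h3⟩
    · rintro ⟨a, b, c⟩ hp ⟨x, y, z⟩ hq heq
      obtain ⟨h1, h2, h3⟩ := mem_Tset.1 hp
      obtain ⟨g1, g2, g3⟩ := mem_Tset.1 hq
      simp only at h1 h2 h3 g1 g2 g3 heq
      have n1 := asymm' hirr htot h1
      have n2 := asymm' hirr htot h2
      have n3 := asymm' hirr htot h3
      have hax : x = a ∨ x = b ∨ x = c := by
        have : x ∈ ({a, b, c} : Finset V) := heq ▸ (by simp)
        simpa using this
      have hbx : y = a ∨ y = b ∨ y = c := by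
        have : y ∈ ({a, b, c} : Finset V) := heq ▸ (by simp)
        simpa using this
      have hcx : z = a ∨ z = b ∨ z = c := by
        have : z ∈ ({a, b, c} : Finset V) := heq ▸ (by simp)
        simpa using this
      have na := hirr a
      have nb := hirr b
      have nc := hirr c
      rcases hax with rfl | rfl | rfl <;> rcases hbx with rfl | rfl | rfl <;>
        rcases hcx with rfl | rfl | rfl <;> first | rfl | tauto
    · intro s hs
      rw [Finset.mem_sdiff, Finset.mem_powersetCard_univ] at hs
      obtain ⟨hs3, hsU⟩ := hs
      obtain ⟨a, b, c, hab, hac, hbc, rfl⟩ := Finset.card_eq_three.1 hs3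
      by_cases p1 : E a b
      · by_cases p2 : E b c
        · by_cases p3 : E a c
          · exact ⟨(a, b, c), mem_Tset.2 ⟨p1, p2, p3⟩, rfl⟩
          · exact absurd (mem_Uc.2 ⟨card3 hab hac hbc, a, b, c, rfl, p1, p2,
              tot' htot hac p3⟩) hsU
        · have p2' : E c b := tot' htot hbc p2
          by_cases p3 : E a c
          · refine ⟨(a, c, b), mem_Tset.2 ⟨p3, p2', p1⟩, ?_⟩
            ext x; simp; tauto
          · have p3' : E c a := tot' htot hac p3
            refine ⟨(c, a, b), mem_Tset.2 ⟨p3', p1, p2'⟩, ?_⟩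
            ext x; simp; tauto
      · have p1' : E b a := tot' htot hab p1
        by_cases p2 : E b c
        · by_cases p3 : E a c
          · refine ⟨(b, a, c), mem_Tset.2 ⟨p1', p3, p2⟩, ?_⟩
            ext x; simp; tauto
          · have p3' : E c a := tot' htot hac p3
            refine ⟨(b, c, a), mem_Tset.2 ⟨p2, p3', p1'⟩, ?_⟩
            ext x; simp; tauto
        · have p2' : E c b := tot' htot hbc p2
          by_cases p3 : E a c
          · exact absurd (mem_Uc.2 ⟨card3 hab hac hbc, a, c, b, by
              (ext x; simp; tauto), p3, p2', p1'⟩) hsU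
          · have p3' : E c a := tot' htot hac p3
            refine ⟨(c, b, a), mem_Tset.2 ⟨p2', p1', p3'⟩, ?_⟩
            ext x; simp; tauto
  rw [hbij, Finset.card_sdiff_add_card_eq_card hUsub, Finset.card_powersetCard,
    Finset.card_univ]


include hirr htot in
lemma half (S : Finset V) :
    2 * (S.offDiag.filter fun p => E p.1 p.2).card = S.card * (S.card - 1) := by
  have hcongr : S.offDiag.filter (fun p => ¬ E p.1 p.2) =
      S.offDiag.filter (fun p => E p.2 p.1) := by
    apply Finset.filter_congr
    intro p hp
    rw [Finset.mem_offDiag] at hp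
    exact ⟨tot' htot hp.2.2, fun h => asymm' hirr htot h⟩
  have hswap : (S.offDiag.filter fun p => E p.2 p.1).card =
      (S.offDiag.filter fun p => E p.1 p.2).card := by
    apply Finset.card_bij (fun p _ => (p.2, p.1))
    · intro p hp
      rw [Finset.mem_filter, Finset.mem_offDiag] at hp ⊢
      exact ⟨⟨hp.1.2.1, hp.1.1, hp.1.2.2.symm⟩, hp.2⟩
    · intro p _ q _ h
      simpa [Prod.ext_iff, and_comm] using h
    · intro p hp
      rw [Finset.mem_filter, Finset.mem_offDiag] at hp
      exact ⟨(p.2, p.1), by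
        rw [Finset.mem_filter, Finset.mem_offDiag]
        exact ⟨⟨hp.1.2.1, hp.1.1, hp.1.2.2.symm⟩, hp.2⟩, rfl⟩
  have hpart : (S.offDiag.filter fun p => E p.1 p.2).card +
      (S.offDiag.filter fun p => ¬ E p.1 p.2).card = S.offDiag.card :=
    Finset.card_filter_add_card_filter_not _
  rw [hcongr, hswap] at hpart
  have hoff := Finset.offDiag_card S
  have hmm : S.card * S.card - S.card = S.card * (S.card - 1) := by
    cases S.card with
    | zero => simp
    | succ m => rw [Nat.succ_sub_one, Nat.mul_succ, Nat.add_sub_cancel]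
  omega

include hirr htot in
lemma deg_card (d : V → ℕ) (hd : ∀ v : V, d v = Nat.card {w : V // E v w}) (v : V) :
    d v = (univ.filter (E v ·)).card := by
  rw [hd v, Nat.card_eq_fintype_card, Fintype.card_subtype]

include hirr htot in
lemma sum_deg (d : V → ℕ) (hd : ∀ v : V, d v = Nat.card {w : V // E v w}) :
    2 * ∑ v : V, d v = Fintype.card V * (Fintype.card V - 1) := by
  have key : ((univ : Finset V).offDiag.filter fun p => E p.1 p.2).card = ∑ v : V, d v := by
    rw [Finset.card_eq_sum_card_fiberwise (f := Prod.fst) (t := univ) (fun p _ => mem_univ _)]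
    apply Finset.sum_congr rfl
    intro v _
    rw [deg_card hirr htot d hd v]
    apply Finset.card_bij (fun p _ => p.2)
    · intro p hp
      rw [Finset.mem_filter, Finset.mem_filter, Finset.mem_offDiag] at hp
      rw [Finset.mem_filter]
      exact ⟨mem_univ _, hp.2 ▸ hp.1.2⟩
    · intro p hp q hq h
      rw [Finset.mem_filter] at hp hq
      exact Prod.ext (hp.2.trans hq.2.symm) h
    · intro w hw
      rw [Finset.mem_filter] at hw
      refine ⟨(v, w), ?_, rfl⟩
      rw [Finset.mem_filter, Finset.mem_filter, Finset.mem_offDiag]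
      exact ⟨⟨⟨mem_univ _, mem_univ _, (ne_of_e hirr hw.2).symm ∘ Eq.symm⟩, hw.2⟩, rfl⟩
  rw [← key, half hirr htot, Finset.card_univ]

include hirr htot in
lemma sum_deg_sub (d : V → ℕ) (hd : ∀ v : V, d v = Nat.card {w : V // E v w}) :
    ∑ v : V, d v * (d v - 1) = 2 * (Tset E).card := by
  have key : (Tset E).card =
      ∑ v : V, (((univ.filter (E v ·)).offDiag).filter fun p => E p.1 p.2).card := by
    rw [Finset.card_eq_sum_card_fiberwise (f := Prod.fst) (t := univ) (fun p _ => mem_univ _)]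
    apply Finset.sum_congr rfl
    intro v _
    apply Finset.card_bij (fun p _ => p.2)
    · intro p hp
      rw [Finset.mem_filter] at hp
      obtain ⟨hps, hp1⟩ := hp
      obtain ⟨h1, h2, h3⟩ := mem_Tset.1 hps
      rw [Finset.mem_filter, Finset.mem_offDiag]
      subst hp1
      exact ⟨⟨by simp [h1], by simp [h3], ne_of_e hirr h2⟩, h2⟩
    · intro p hp q hq h
      rw [Finset.mem_filter] at hp hq
      exact Prod.ext (hp.2.trans hq.2.symm) h
    · intro w hw
      rw [Finset.mem_filter, Finset.mem_offDiag] at hw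
      simp only [Finset.mem_filter] at hw
      refine ⟨(v, w), ?_, rfl⟩
      exact Finset.mem_filter.2 ⟨mem_Tset.2 ⟨hw.1.1.2, hw.2, hw.1.2.1.2⟩, rfl⟩
  rw [key, Finset.mul_sum]
  apply Finset.sum_congr rfl
  intro v _
  rw [deg_card hirr htot d hd v, ← half hirr htot]


lemma card_strictMono (k n : ℕ) :
    Nat.card {ψ : Fin k → Fin n // StrictMono ψ} = n.choose k := by
  have : Nat.card {ψ : Fin k → Fin n // StrictMono ψ} =
      Nat.card {s : Finset (Fin n) // s.card = k} := by
    apply Nat.card_congr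
    refine Equiv.mk
      (fun ψ => ⟨Finset.image ψ.1 univ, by
        rw [Finset.card_image_of_injective _ ψ.2.injective, Finset.card_univ,
          Fintype.card_fin]⟩)
      (fun s => ⟨s.1.orderEmbOfFin s.2, (s.1.orderEmbOfFin s.2).strictMono⟩) ?_ ?_
    · intro ψ
      apply Subtype.ext
      exact (Finset.orderEmbOfFin_unique _ (fun x => Finset.mem_image_of_mem _ (mem_univ x))
        ψ.2).symm
    · intro s
      apply Subtype.ext
      rw [← Finset.coe_inj, Finset.coe_image, Finset.coe_univ, Set.image_univ,
        Finset.range_orderEmbOfFin]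
  rw [this, Nat.card_eq_fintype_card, Fintype.card_finset_len, Fintype.card_fin]

include hirr htot in
lemma count_trans (n : ℕ) (e : Fin n ≃ V)
    (he : ∀ i j : Fin n, E (e i) (e j) ↔ i < j) (k : ℕ) :
    injHomCount (transRel k) E = n.choose k := by
  have heE : ∀ x y : V, E x y ↔ e.symm x < e.symm y := by
    intro x y
    have := he (e.symm x) (e.symm y)
    rwa [Equiv.apply_symm_apply, Equiv.apply_symm_apply] at this
  rw [injHomCount, ← card_strictMono k n]
  apply Nat.card_congr
  refine Equiv.mk
    (fun φ => ⟨fun i => e.symm (φ.1 i), fun i j hij => (heE _ _).1 (φ.2.2 i j hij)⟩)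
    (fun ψ => ⟨fun i => e (ψ.1 i), e.injective.comp ψ.2.injective,
      fun i j hij => (he _ _).2 (ψ.2 hij)⟩) ?_ ?_
  · intro φ
    apply Subtype.ext
    funext i
    exact e.apply_symm_apply _
  · intro ψ
    apply Subtype.ext
    funext i
    exact e.symm_apply_apply _

include hirr htot in
lemma count_path (n : ℕ) (e : Fin n ≃ V)
    (he : ∀ i j : Fin n, E (e i) (e j) ↔ i < j) (k : ℕ) (hk : 1 ≤ k) :
    injHomCount (pathRel k) E = n.choose k := by
  have heE : ∀ x y : V, E x y ↔ e.symm x < e.symm y := by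
    intro x y
    have := he (e.symm x) (e.symm y)
    rwa [Equiv.apply_symm_apply, Equiv.apply_symm_apply] at this
  obtain ⟨m, rfl⟩ : ∃ m, k = m + 1 := ⟨k - 1, by omega⟩
  rw [injHomCount, ← card_strictMono (m + 1) n]
  apply Nat.card_congr
  refine Equiv.mk
    (fun φ => ⟨fun i => e.symm (φ.1 i), ?_⟩)
    (fun ψ => ⟨fun i => e (ψ.1 i), e.injective.comp ψ.2.injective, ?_⟩) ?_ ?_
  · apply Fin.strictMono_iff_lt_succ.2
    intro i
    exact (heE _ _).1 (φ.2.2 i.castSucc i.succ (by simp [pathRel]))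
  · intro i j hij
    have : i < j := by
      rw [Fin.lt_def]
      have : (j : ℕ) = (i : ℕ) + 1 := hij
      omega
    exact (he _ _).2 (ψ.2 this)
  · intro φ
    apply Subtype.ext
    funext i
    exact e.apply_symm_apply _
  · intro ψ
    apply Subtype.ext
    funext i
    exact e.symm_apply_apply _

lemma two_choose_two : ∀ m : ℕ, 2 * Nat.choose m 2 = m * (m - 1) := by
  intro m
  induction m with
  | zero => simp
  | succ p ih =>
    rw [Nat.choose_succ_succ, Nat.mul_add, ih, Nat.choose_one_right, Nat.succ_sub_one]
    cases p with
    | zero => simp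
    | succ q => rw [Nat.succ_sub_one]; ring

lemma six_choose_three : ∀ m : ℕ, 6 * Nat.choose m 3 = m * (m - 1) * (m - 2) := by
  intro m
  induction m with
  | zero => simp
  | succ p ih =>
    rw [Nat.choose_succ_succ, Nat.mul_add, ih]
    have h2 := two_choose_two p
    rcases Nat.lt_or_ge p 2 with h | h
    · interval_cases p <;> simp [Nat.choose]
    · obtain ⟨r, rfl⟩ : ∃ r, p = r + 2 := ⟨p - 2, by omega⟩
      have e1 : r + 2 - 1 = r + 1 := by omega
      have e2 : r + 2 - 2 = r := by omega
      have e3 : r + 2 + 1 - 1 = r + 2 := by omega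
      have e4 : r + 2 + 1 - 2 = r + 1 := by omega
      rw [e1] at h2
      rw [e1, e2, e3, e4]
      have key : (r + 2 + 1) * (r + 2) * (r + 1) =
          (r + 2) * (r + 1) * r + 3 * ((r + 2) * (r + 1)) := by ring
      linarith

lemma target_eq (n : ℕ) (hn : 3 ≤ n) :
    n * (n - 1) * (2 * n - 1) / 6 = 2 * Nat.choose n 3 + Nat.choose n 2 := by
  obtain ⟨m, rfl⟩ : ∃ m, n = m + 3 := ⟨n - 3, by omega⟩
  have h3 := six_choose_three (m + 3)
  have h2 := two_choose_two (m + 3)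
  have e1 : m + 3 - 1 = m + 2 := by omega
  have e2 : m + 3 - 2 = m + 1 := by omega
  have e3 : 2 * (m + 3) - 1 = 2 * m + 5 := by omega
  rw [e1, e2] at h3
  rw [e1] at h2
  rw [e1, e3]
  have key : (m + 3) * (m + 2) * (2 * m + 5) =
      2 * ((m + 3) * (m + 2) * (m + 1)) + 3 * ((m + 3) * (m + 2)) := by ring
  omega

end MoonAux



open Finset in
/-- Moon's characterisation of transitive finite tournaments. -/
theorem stmt0 {V : Type} [Fintype V] (E : V → V → Prop)
    (hirr : ∀ v : V, ¬ E v v)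
    (htot : ∀ u v : V, u ≠ v → (E u v ↔ ¬ E v u))
    (n : ℕ) (hn : n = Fintype.card V) (hn3 : 3 ≤ n)
    (d : V → ℕ) (hd : ∀ v : V, d v = Nat.card {w : V // E v w}) :
    List.TFAE
      [ -- (1) transitive
        (∀ i j k : V, E i j → E j k → E i k),
        -- (2) acyclic: no directed cycle `C_k`, `k ≥ 3`, as a subgraph
        (∀ k : ℕ, 3 ≤ k → ¬ ∃ φ : Fin k → V, Function.Injective φ ∧
            ∀ i j : Fin k, cycleRel k i j → E (φ i) (φ j)),
        -- (3) no directed 3-cycle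
        (¬ ∃ φ : Fin 3 → V, Function.Injective φ ∧
            ∀ i j : Fin 3, cycleRel 3 i j → E (φ i) (φ j)),
        -- (4) vertices can be enumerated compatibly with the edges
        (∃ e : Fin n ≃ V, ∀ i j : Fin n, E (e i) (e j) ↔ i < j),
        -- (5) sum of squared out-degrees
        (∑ v : V, (d v) ^ 2 = n * (n - 1) * (2 * n - 1) / 6),
        -- (6) counts of paths `P_k`
        (∀ k : ℕ, 1 ≤ k → k ≤ n → injHomCount (pathRel k) E = Nat.choose n k),
        -- (7) count of `P_3`
        (injHomCount (pathRel 3) E = Nat.choose n 3),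
        -- (8) counts of transitive tournaments `T_k`
        (∀ k : ℕ, 1 ≤ k → k ≤ n → injHomCount (transRel k) E = Nat.choose n k),
        -- (9) count of `T_3`
        (injHomCount (transRel 3) E = Nat.choose n 3) ] := by
  have hTU : (MoonAux.Tset E).card + (MoonAux.Uc E).card = n.choose 3 := by
    rw [hn]; exact MoonAux.Tset_card hirr htot
  have hsq : ∑ v : V, (d v) ^ 2 = 2 * (MoonAux.Tset E).card + n.choose 2 := by
    have h1 := MoonAux.sum_deg hirr htot d hd
    have h2 := MoonAux.sum_deg_sub hirr htot d hd
    have h3 : ∀ v : V, (d v) ^ 2 = d v * (d v - 1) + d v := by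
      intro v
      cases d v with
      | zero => simp
      | succ m => rw [Nat.succ_sub_one, pow_two]; ring
    have h2c := MoonAux.two_choose_two n
    rw [← hn] at h1
    calc ∑ v : V, (d v) ^ 2 = ∑ v : V, (d v * (d v - 1) + d v) :=
          Finset.sum_congr rfl (fun v _ => h3 v)
      _ = (∑ v : V, d v * (d v - 1)) + ∑ v : V, d v := Finset.sum_add_distrib
      _ = 2 * (MoonAux.Tset E).card + n.choose 2 := by omega
  have hUc3 : (¬ ∃ φ : Fin 3 → V, Function.Injective φ ∧
      ∀ i j : Fin 3, cycleRel 3 i j → E (φ i) (φ j)) ↔ (MoonAux.Uc E) = ∅ := by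
    rw [MoonAux.no_c3_iff hirr, MoonAux.Cset_empty_iff_Uc hirr htot]
  have htarget := MoonAux.target_eq n hn3
  tfae_have 1 → 4 := by
    intro h1
    letI : DecidableRel E := Classical.decRel E
    haveI : IsStrictTotalOrder V E :=
      { trichotomous := fun a b => by
          by_cases hab : a = b
          · exact fun _ _ => hab
          · by_cases hE : E a b
            · exact fun h _ => absurd hE h
            · exact fun _ h => absurd (MoonAux.tot' htot hab hE) h
        irrefl := hirr
        trans := h1 }
    letI := linearOrderOfSTO E
    let e : Fin n ≃o V := Fintype.orderIsoFinOfCardEq V hn.symm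
    refine ⟨e.toEquiv, fun i j => ?_⟩
    constructor
    · intro hE
      exact e.lt_iff_lt.1 hE
    · intro hij
      exact e.lt_iff_lt.2 hij
  tfae_have 4 → 2 := by
    rintro ⟨e, he⟩ k hk3 ⟨φ, hinj, hpres⟩
    have heE : ∀ x y : V, E x y ↔ e.symm x < e.symm y := by
      intro x y
      have := he (e.symm x) (e.symm y)
      rwa [Equiv.apply_symm_apply, Equiv.apply_symm_apply] at this
    obtain ⟨m, rfl⟩ : ∃ m, k = m + 1 := ⟨k - 1, by omega⟩
    set ψ : Fin (m + 1) → Fin n := fun i => e.symm (φ i) with hψ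
    have hmono : StrictMono ψ := Fin.strictMono_iff_lt_succ.2 (fun i =>
      (heE _ _).1 (hpres i.castSucc i.succ (Or.inl (by simp))))
    have hlast : cycleRel (m + 1) (Fin.last m) 0 := Or.inr ⟨by simp, rfl⟩
    have h2 : ψ (Fin.last m) < ψ 0 := (heE _ _).1 (hpres (Fin.last m) 0 hlast)
    have h0last : (0 : Fin (m + 1)) < Fin.last m := by
      rw [Fin.lt_def]
      simp only [Fin.val_zero, Fin.val_last]
      omega
    exact absurd (hmono h0last) (lt_asymm h2)
  tfae_have 2 → 3 := fun h => h 3 le_rfl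
  tfae_have 3 → 1 := by
    intro h3 i j k hij hjk
    by_contra hik
    have hne_ik : k ≠ i := by
      rintro rfl
      exact MoonAux.asymm' hirr htot hij hjk
    have hki : E k i := MoonAux.tot' htot (Ne.symm hne_ik) hik
    exact h3 ⟨![i, j, k], MoonAux.inj3 (MoonAux.ne_of_e hirr hij) (Ne.symm hne_ik)
      (MoonAux.ne_of_e hirr hjk), MoonAux.pres_cyc3 hij hjk hki⟩
  tfae_have 4 → 6 := by
    rintro ⟨e, he⟩ k hk _
    exact MoonAux.count_path hirr htot n e he k hk
  tfae_have 6 → 7 := fun h => h 3 (by norm_num) hn3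
  tfae_have 7 → 3 := by
    intro h7
    rw [MoonAux.count_P3 hirr, MoonAux.Pset_eq hirr htot] at h7
    have hlb := MoonAux.Cset_lb hirr htot (E := E)
    rw [hUc3]
    rw [← Finset.card_eq_zero]
    omega
  tfae_have 4 → 8 := by
    rintro ⟨e, he⟩ k hk _
    exact MoonAux.count_trans hirr htot n e he k
  tfae_have 8 → 9 := fun h => h 3 (by norm_num) hn3
  tfae_have 9 → 3 := by
    intro h9
    rw [MoonAux.count_T3 hirr] at h9
    rw [hUc3, ← Finset.card_eq_zero]
    omega
  tfae_have 3 → 5 := by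
    intro h3
    have hU : (MoonAux.Uc E) = ∅ := hUc3.1 h3
    rw [hU, Finset.card_empty] at hTU
    rw [hsq, htarget]
    omega
  tfae_have 5 → 3 := by
    intro h5
    rw [hsq, htarget] at h5
    rw [hUc3, ← Finset.card_eq_zero]
    omega
  tfae_finish
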